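/- Let P_1, ..., P_{d(d+1)/2} ∈ M_d(ℂ) be real orthogonal projections of common rank r (with 1 ≤ r < d), equiangular with common angle β = r(rd + r − 2)/((d+2)(d−1)), spanning the symmetric subspace S_d. Then there exists z ∈ ℂ with |z| = 1 such that the matrices U_i := I_d − (1−z)·P_i are unitary and satisfy tr(U_i* U_j) = 0 for all i ≠ j, if and only if 2r − 1 ≤ d ≤ 2r + 1. -/

import Mathlib

open Matrix

set_option maxHeartbeats 1000000

lemma trace_eq_rank_of_idem {d : ℕ} (A : Matrix (Fin d) (Fin d) ℝ) (h : A * A = A) :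
    Matrix.trace A = (A.rank : ℝ) := by
  have hf : A.mulVecLin ∘ₗ A.mulVecLin = A.mulVecLin := by
    rw [← Matrix.mulVecLin_mul, h]
  have hproj : LinearMap.IsProj (LinearMap.range A.mulVecLin) A.mulVecLin := by
    refine ⟨fun x => LinearMap.mem_range_self _ x, ?_⟩
    rintro x ⟨y, rfl⟩
    rw [← LinearMap.comp_apply, hf]
  have ht := hproj.trace
  rw [Matrix.rank, ← ht, LinearMap.trace_eq_matrix_trace ℝ (Pi.basisFun ℝ (Fin d)),
    LinearMap.toMatrix_eq_toMatrix', ← Matrix.toLin'_apply', LinearMap.toMatrix'_toLin']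

lemma key_mul {d : ℕ} (A B : Matrix (Fin d) (Fin d) ℂ) (a b : ℂ) :
    (1 - a • A) * (1 - b • B) = 1 - a • A - b • B + (a * b) • (A * B) := by
  rw [sub_mul, mul_sub, mul_sub, one_mul, one_mul, mul_one, smul_mul_smul_comm]
  abel

/-- The symmetric subspace `S_d` of `M_d(ℂ)`: matrices `A` with `Aᵀ = A`. -/
noncomputable def symMatrices (d : ℕ) : Submodule ℂ (Matrix (Fin d) (Fin d) ℂ) where
  carrier := {A : Matrix (Fin d) (Fin d) ℂ | Aᵀ = A}
  add_mem' := by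
    intro a b ha hb
    simp only [Set.mem_setOf_eq, Matrix.transpose_add] at *
    rw [ha, hb]
  zero_mem' := by simp
  smul_mem' := by
    intro c A hA
    simp only [Set.mem_setOf_eq, Matrix.transpose_smul] at *
    rw [hA]

/-- for d(d+1)/2 real rank-r equiangular projections with the maximal
angle β = r(rd+r−2)/((d+2)(d−1)) spanning S_d, a unimodular z making the matrices
U_i = I − (1−z)P_i unitary and pairwise trace-orthogonal exists iff 2r−1 ≤ d ≤ 2r+1. -/
theorem equiangular_projections_unitaries_iff
    {d r : ℕ} (hr : 1 ≤ r) (hrd : r < d)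
    (P : Fin (d * (d + 1) / 2) → Matrix (Fin d) (Fin d) ℝ)
    (hidem : ∀ i, P i * P i = P i)
    (hsymm : ∀ i, (P i)ᵀ = P i)
    (hrank : ∀ i, (P i).rank = r)
    (hang : ∀ i j, i ≠ j → Matrix.trace (P i * P j)
        = (r : ℝ) * ((r : ℝ) * (d : ℝ) + (r : ℝ) - 2) / (((d : ℝ) + 2) * ((d : ℝ) - 1)))
    (hspan : Submodule.span ℂ (Set.range fun i => (P i).map Complex.ofReal)
        = symMatrices d) :
    (∃ z : ℂ, ‖z‖ = 1 ∧
      (∀ i, (1 - (1 - z) • (P i).map Complex.ofReal) ∈ Matrix.unitaryGroup (Fin d) ℂ) ∧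
      (∀ i j, i ≠ j →
        Matrix.trace ((1 - (1 - z) • (P i).map Complex.ofReal)ᴴ *
          (1 - (1 - z) • (P j).map Complex.ofReal)) = 0))
    ↔ (2 * r - 1 ≤ d ∧ d ≤ 2 * r + 1) := by
  have hd2 : 2 ≤ d := by omega
  set β : ℝ := (r : ℝ) * ((r : ℝ) * (d : ℝ) + (r : ℝ) - 2)
      / (((d : ℝ) + 2) * ((d : ℝ) - 1)) with hβdef
  have hd2R : (2:ℝ) ≤ (d:ℝ) := by exact_mod_cast hd2
  have hr1R : (1:ℝ) ≤ (r:ℝ) := by exact_mod_cast hr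
  have hrdR : (r:ℝ) + 1 ≤ (d:ℝ) := by exact_mod_cast hrd
  have hden : (0:ℝ) < ((d:ℝ)+2)*((d:ℝ)-1) := by nlinarith
  have hβden : β * (((d:ℝ)+2)*((d:ℝ)-1)) = (r:ℝ)*((r:ℝ)*(d:ℝ)+(r:ℝ)-2) :=
    div_mul_cancel₀ _ hden.ne'
  have hnum : ((r:ℝ) - β) * (((d:ℝ)+2)*((d:ℝ)-1)) = (r:ℝ)*((d:ℝ)-(r:ℝ))*((d:ℝ)+1) := by
    rw [sub_mul, hβden]; ring
  have hpos : (0:ℝ) < (r:ℝ)*((d:ℝ)-(r:ℝ))*((d:ℝ)+1) :=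
    mul_pos (mul_pos (by linarith) (by linarith)) (by linarith)
  have hrbpos : (0:ℝ) < (r:ℝ) - β := by nlinarith [hnum, hpos, hden]
  -- matrix facts
  have hmap : ∀ A B : Matrix (Fin d) (Fin d) ℝ,
      (A * B).map Complex.ofReal = A.map Complex.ofReal * B.map Complex.ofReal := by
    intro A B
    exact Matrix.map_mul (f := Complex.ofRealHom)
  have htrmap : ∀ A : Matrix (Fin d) (Fin d) ℝ,
      Matrix.trace (A.map Complex.ofReal) = ((Matrix.trace A : ℝ) : ℂ) := by
    intro A
    simp [Matrix.trace, Matrix.diag, Matrix.map_apply]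
  have hQherm : ∀ i, ((P i).map Complex.ofReal)ᴴ = (P i).map Complex.ofReal := by
    intro i
    ext a b
    have h := congrFun (congrFun (hsymm i) a) b
    simp only [Matrix.conjTranspose_apply, Matrix.map_apply, Complex.star_def,
      Complex.conj_ofReal]
    exact_mod_cast h
  have hQidem : ∀ i, (P i).map Complex.ofReal * (P i).map Complex.ofReal
      = (P i).map Complex.ofReal := by
    intro i
    rw [← hmap, hidem]
  have htrQ : ∀ i, Matrix.trace ((P i).map Complex.ofReal) = ((r:ℝ) : ℂ) := by
    intro i
    rw [htrmap, trace_eq_rank_of_idem _ (hidem i), hrank i]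
  have htrQQ : ∀ i j, i ≠ j →
      Matrix.trace ((P i).map Complex.ofReal * (P j).map Complex.ofReal) = ((β:ℝ) : ℂ) := by
    intro i j hij
    rw [← hmap, htrmap, hang i j hij]
  -- unitarity for any unimodular z
  have hunit : ∀ z : ℂ, Complex.normSq z = 1 →
      ∀ i, (1 - (1 - z) • (P i).map Complex.ofReal) ∈ Matrix.unitaryGroup (Fin d) ℂ := by
    intro z hz i
    have hz' : z.re * z.re + z.im * z.im = 1 := hz
    have h0 : (1 - z) + star (1 - z) - (1 - z) * star (1 - z) = 0 := by
      apply Complex.ext <;>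
        simp [Complex.mul_re, Complex.mul_im] <;> nlinarith [hz']
    rw [Matrix.mem_unitaryGroup_iff, Matrix.star_eq_conjTranspose,
      Matrix.conjTranspose_sub, Matrix.conjTranspose_one, Matrix.conjTranspose_smul, hQherm i,
      key_mul, hQidem i]
    have heq : (1 : Matrix (Fin d) (Fin d) ℂ) - (1-z) • (P i).map Complex.ofReal
        - star (1-z) • (P i).map Complex.ofReal
        + ((1-z) * star (1-z)) • (P i).map Complex.ofReal
        = 1 - ((1-z) + star (1-z) - (1-z) * star (1-z)) • (P i).map Complex.ofReal := by
      module
    rw [heq, h0, zero_smul, sub_zero]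
  -- trace formula
  have htrace : ∀ z : ℂ, Complex.normSq z = 1 → ∀ i j, i ≠ j →
      Matrix.trace ((1 - (1 - z) • (P i).map Complex.ofReal)ᴴ *
          (1 - (1 - z) • (P j).map Complex.ofReal))
        = (((d:ℝ) - (2 - 2*z.re) * ((r:ℝ) - β) : ℝ) : ℂ) := by
    intro z hz i j hij
    have hz' : z.re * z.re + z.im * z.im = 1 := hz
    have hc1 : star (1 - z) + (1 - z) = ((2 - 2*z.re : ℝ) : ℂ) := by
      apply Complex.ext <;> simp <;> ring
    have hc2 : star (1 - z) * (1 - z) = ((2 - 2*z.re : ℝ) : ℂ) := by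
      apply Complex.ext <;>
        simp [Complex.mul_re, Complex.mul_im] <;> nlinarith [hz']
    rw [Matrix.conjTranspose_sub, Matrix.conjTranspose_one, Matrix.conjTranspose_smul,
      hQherm i, key_mul, Matrix.trace_add, Matrix.trace_sub, Matrix.trace_sub,
      Matrix.trace_one, Matrix.trace_smul, Matrix.trace_smul, Matrix.trace_smul,
      htrQ i, htrQ j, htrQQ i j hij]
    simp only [smul_eq_mul]
    push_cast at hc1 hc2 ⊢
    simp only [Fintype.card_fin]
    linear_combination (-(r : ℂ)) * hc1 + ((β:ℝ) : ℂ) * hc2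
  constructor
  · rintro ⟨z, habs, -, htr⟩
    have hz : Complex.normSq z = 1 := by rw [← Complex.sq_norm, habs]; norm_num
    have hcard : 1 < d * (d+1)/2 := by
      have h6 : 2*3 ≤ d*(d+1) := Nat.mul_le_mul hd2 (by omega)
      omega
    have hne : (⟨0, by omega⟩ : Fin (d*(d+1)/2)) ≠ ⟨1, hcard⟩ := by
      simp [Fin.ext_iff]
    have h0 := htr _ _ hne
    rw [htrace z hz _ _ hne] at h0
    have h0R : (d:ℝ) - (2 - 2*z.re)*((r:ℝ) - β) = 0 := by exact_mod_cast h0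
    have hre : -1 ≤ z.re := by
      have h := Complex.abs_re_le_norm z
      rw [habs] at h
      linarith [(abs_le.1 h).1]
    have h4 : (d:ℝ) ≤ 4 * ((r:ℝ) - β) := by nlinarith [h0R, hre, hrbpos]
    have h5 : (d:ℝ) * (((d:ℝ)+2)*((d:ℝ)-1)) ≤ 4*((r:ℝ)*((d:ℝ)-(r:ℝ))*((d:ℝ)+1)) := by
      nlinarith [mul_le_mul_of_nonneg_right h4 hden.le, hnum]
    have hkey : ((d:ℝ) - 2*(r:ℝ))^2 * ((d:ℝ)+1) ≤ 2*(d:ℝ) := by nlinarith [h5]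
    have hkZ : ((d:ℤ) - 2*(r:ℤ))^2 * ((d:ℤ)+1) ≤ 2*(d:ℤ) := by exact_mod_cast hkey
    have hdZ : (2:ℤ) ≤ (d:ℤ) := by exact_mod_cast hd2
    have hm2 : ((d:ℤ) - 2*(r:ℤ))^2 ≤ 1 := by
      by_contra hcon
      push_neg at hcon
      have h2m : (2:ℤ) ≤ ((d:ℤ) - 2*(r:ℤ))^2 := hcon
      have := mul_le_mul_of_nonneg_right h2m (show (0:ℤ) ≤ (d:ℤ)+1 by omega)
      linarith
    have hma : -1 ≤ (d:ℤ) - 2*(r:ℤ) := by nlinarith [hm2, sq_nonneg ((d:ℤ) - 2*(r:ℤ) + 1)]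
    have hmb : (d:ℤ) - 2*(r:ℤ) ≤ 1 := by nlinarith [hm2, sq_nonneg ((d:ℤ) - 2*(r:ℤ) - 1)]
    omega
  · rintro ⟨h1, h2⟩
    have ha : -1 ≤ (d:ℤ) - 2*(r:ℤ) := by omega
    have hb : (d:ℤ) - 2*(r:ℤ) ≤ 1 := by omega
    have hm2R : ((d:ℝ) - 2*(r:ℝ))^2 ≤ 1 := by
      have hZ : ((d:ℤ) - 2*(r:ℤ))^2 ≤ 1 := by nlinarith [ha, hb]
      exact_mod_cast hZ
    have hkeyR : ((d:ℝ) - 2*(r:ℝ))^2 * ((d:ℝ)+1) ≤ 2*(d:ℝ) := by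
      nlinarith [hm2R, hd2R]
    have h5 : (d:ℝ)*(((d:ℝ)+2)*((d:ℝ)-1)) ≤ 4*((r:ℝ)*((d:ℝ)-(r:ℝ))*((d:ℝ)+1)) := by
      nlinarith [hkeyR]
    have hle : (d:ℝ) ≤ 4*((r:ℝ) - β) := by
      by_contra hcontra
      push_neg at hcontra
      nlinarith [h5, hnum, mul_lt_mul_of_pos_right hcontra hden]
    have hdpos : (0:ℝ) < (d:ℝ) := by linarith
    have hwpos : 0 < (d:ℝ)/((r:ℝ) - β) := div_pos hdpos hrbpos
    have hw4 : (d:ℝ)/((r:ℝ) - β) ≤ 4 := by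
      rw [div_le_iff₀ hrbpos]
      linarith [hle]
    set w : ℝ := (d:ℝ)/((r:ℝ) - β) with hw
    set x : ℝ := 1 - w/2 with hxdef
    have hx1 : -1 ≤ x := by rw [hxdef]; linarith
    have hx2 : x ≤ 1 := by rw [hxdef]; linarith
    have hy0 : 0 ≤ 1 - x^2 := by nlinarith
    set y : ℝ := Real.sqrt (1 - x^2) with hydef
    have hy2 : y^2 = 1 - x^2 := Real.sq_sqrt hy0
    have hz : Complex.normSq (⟨x,y⟩:ℂ) = 1 := by
      rw [Complex.normSq_mk]; nlinarith
    refine ⟨⟨x, y⟩, ?_, hunit _ hz, ?_⟩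
    · rw [Complex.norm_def, hz]
      exact Real.sqrt_one
    · intro i j hij
      rw [htrace _ hz i j hij, Complex.ofReal_eq_zero]
      have hrex : (⟨x,y⟩:ℂ).re = x := rfl
      rw [hrex]
      have h2x : (2:ℝ) - 2*x = w := by rw [hxdef]; ring
      rw [h2x, hw, div_mul_cancel₀ _ hrbpos.ne']
      ring
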